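/- In the set of all planar rooted trees with n vertices, the total number of vertices with even arity equals the n-th log-Catalan number c'_n. Equivalently, the generating series of the number of odd-arity vertices across all planar trees with n vertices equals t(1-√(1-4t)) / ((3-√(1-4t))√(1-4t)), with coefficients 0, 1, 2, 7, 24, 86, 314, ... -/

import Mathlib

open PowerSeries

/-- A planar rooted tree: each vertex has a finite ordered (possibly empty) list of
children. -/
inductive PTree6 : Type
  | node : (k : ℕ) → (Fin k → PTree6) → PTree6

namespace PTree6

/-- Number of vertices. -/
def vcount : PTree6 → ℕ
  | .node k f => 1 + ∑ i : Fin k, vcount (f i)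

/-- Number of vertices of even arity (arity = number of children; leaves have arity 0,
which is even). -/
def evenAr : PTree6 → ℕ
  | .node k f => (if Even k then 1 else 0) + ∑ i : Fin k, evenAr (f i)

/-- Number of vertices of odd arity. -/
def oddAr : PTree6 → ℕ
  | .node k f => (if ¬ Even k then 1 else 0) + ∑ i : Fin k, oddAr (f i)

end PTree6

namespace PTree6

noncomputable local instance : DecidableEq PTree6 := Classical.decEq _

def ofList (L : List PTree6) : PTree6 := .node L.length L.get

lemma sum_fin_eq_sum_map (g : PTree6 → ℕ) (L : List PTree6) :
    ∑ i : Fin L.length, g (L.get i) = (L.map g).sum := by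
  rw [← List.sum_ofFn]
  congr 1
  conv_rhs => rw [← List.ofFn_get L, List.map_ofFn]
  rfl

lemma vcount_ofList (L : List PTree6) : vcount (ofList L) = 1 + (L.map vcount).sum := by
  show (1 + ∑ i : Fin L.length, vcount (L.get i)) = _
  rw [sum_fin_eq_sum_map]

lemma evenAr_ofList (L : List PTree6) :
    evenAr (ofList L) = (if Even L.length then 1 else 0) + (L.map evenAr).sum := by
  show ((if Even L.length then 1 else 0) + ∑ i : Fin L.length, evenAr (L.get i)) = _
  rw [sum_fin_eq_sum_map]

lemma oddAr_ofList (L : List PTree6) :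
    oddAr (ofList L) = (if ¬ Even L.length then 1 else 0) + (L.map oddAr).sum := by
  show ((if ¬ Even L.length then 1 else 0) + ∑ i : Fin L.length, oddAr (L.get i)) = _
  rw [sum_fin_eq_sum_map]

lemma vcount_pos (t : PTree6) : 0 < vcount t := by
  cases t with
  | node k f => show 0 < 1 + _ ; omega
def toList : PTree6 → List PTree6
  | .node _ f => List.ofFn f

lemma ofList_injective : Function.Injective ofList := by
  have h : ∀ L, toList (ofList L) = L := by
    intro L; simp [toList, ofList, List.ofFn_get]
  exact Function.LeftInverse.injective h

lemma ofList_toList (t : PTree6) : ofList (toList t) = t := by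
  cases t with
  | node k f =>
    have h : (List.ofFn f).length = k := List.length_ofFn
    show PTree6.node (List.ofFn f).length (List.ofFn f).get = PTree6.node k f
    congr 1
    apply Function.hfunext (by rw [h])
    intro i j hij
    have h1 : (List.ofFn f).get i = f (Fin.cast h i) := List.get_ofFn f i
    have h2 : Fin.cast h i = j := by
      apply Fin.ext
      exact (Fin.heq_ext_iff h).mp hij
    rw [h1, h2]
noncomputable local instance : DecidableEq PTree6 := Classical.decEq _

def fsize (L : List PTree6) : ℕ := (L.map vcount).sum

@[simp] lemma fsize_nil : fsize [] = 0 := rfl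
@[simp] lemma fsize_cons (t : PTree6) (L : List PTree6) :
    fsize (t :: L) = vcount t + fsize L := by simp [fsize]

noncomputable def FL : ℕ → Finset (List PTree6)
  | 0 => {[]}
  | (m+1) => (Finset.range (m+1)).biUnion fun l =>
      ((FL (min l m)) ×ˢ (FL (m - l))).image fun p => ofList p.1 :: p.2
  decreasing_by all_goals omega

lemma FL_succ (m : ℕ) : FL (m+1) = (Finset.range (m+1)).biUnion fun l =>
    ((FL l) ×ˢ (FL (m - l))).image fun p => ofList p.1 :: p.2 := by
  rw [FL]
  apply Finset.biUnion_congr rfl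
  intro l hl
  rw [Finset.mem_range] at hl
  rw [min_eq_left (by omega : l ≤ m)]

lemma mem_FL : ∀ m L, L ∈ FL m ↔ fsize L = m := by
  intro m
  induction m using Nat.strong_induction_on with
  | _ m ih =>
    intro L
    match m with
    | 0 =>
      rw [show FL 0 = {[]} from by rw [FL]]
      simp only [Finset.mem_singleton]
      constructor
      · rintro rfl; rfl
      · intro h
        cases L with
        | nil => rfl
        | cons t L' =>
          exfalso
          have := vcount_pos t
          simp [fsize] at h
          omega
    | (m+1) =>
      rw [FL_succ, Finset.mem_biUnion]
      constructor
      · rintro ⟨l, hl, hL⟩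
        rw [Finset.mem_range] at hl
        rw [Finset.mem_image] at hL
        obtain ⟨⟨A, B⟩, hAB, rfl⟩ := hL
        rw [Finset.mem_product] at hAB
        have hA := (ih l (by omega) A).mp hAB.1
        have hB := (ih (m - l) (by omega) B).mp hAB.2
        simp [vcount_ofList, fsize] at *
        omega
      · intro h
        cases L with
        | nil => simp at h
        | cons t B =>
          refine ⟨fsize (toList t), ?_, ?_⟩
          · rw [Finset.mem_range]
            have h1 : vcount t = 1 + fsize (toList t) := by
              conv_lhs => rw [← ofList_toList t]
              rw [vcount_ofList]; rfl
            have := vcount_pos t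
            simp only [fsize_cons] at h
            omega
          · rw [Finset.mem_image]
            refine ⟨(toList t, B), ?_, by rw [ofList_toList]⟩
            rw [Finset.mem_product]
            have h1 : vcount t = 1 + fsize (toList t) := by
              conv_lhs => rw [← ofList_toList t]
              rw [vcount_ofList]; rfl
            simp only [fsize_cons] at h
            refine ⟨(ih _ (by omega) _).mpr rfl, (ih _ (by omega) _).mpr ?_⟩
            show fsize B = m - fsize (toList t)
            omega

noncomputable def Tn : ℕ → Finset PTree6
  | 0 => ∅
  | (n+1) => (FL n).image ofList

lemma mem_Tn : ∀ n t, t ∈ Tn n ↔ vcount t = n := by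
  intro n t
  match n with
  | 0 =>
    rw [show Tn 0 = ∅ from by rw [Tn]]
    simp only [Finset.notMem_empty, false_iff]
    have := vcount_pos t
    omega
  | (n+1) =>
    rw [show Tn (n+1) = (FL n).image ofList from by rw [Tn], Finset.mem_image]
    constructor
    · rintro ⟨L, hL, rfl⟩
      rw [mem_FL] at hL
      rw [vcount_ofList]
      show 1 + fsize L = n + 1
      omega
    · intro h
      refine ⟨toList t, ?_, ofList_toList t⟩
      rw [mem_FL]
      have h1 : vcount t = 1 + fsize (toList t) := by
        conv_lhs => rw [← ofList_toList t]
        rw [vcount_ofList]; rfl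
      omega

lemma sum_Tn_succ {M : Type*} [AddCommMonoid M] (g : PTree6 → M) (n : ℕ) :
    ∑ t ∈ Tn (n+1), g t = ∑ L ∈ FL n, g (ofList L) := by
  rw [show Tn (n+1) = (FL n).image ofList from by rw [Tn], Finset.sum_image]
  intro a _ b _ h
  exact ofList_injective h

lemma sum_FL_succ {M : Type*} [AddCommMonoid M] (g : List PTree6 → M) (m : ℕ) :
    ∑ L ∈ FL (m+1), g L
      = ∑ l ∈ Finset.range (m+1), ∑ A ∈ FL l, ∑ B ∈ FL (m-l), g (ofList A :: B) := by
  rw [FL_succ, Finset.sum_biUnion]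
  · apply Finset.sum_congr rfl
    intro l _
    rw [Finset.sum_image, Finset.sum_product]
    rintro ⟨A, B⟩ _ ⟨A', B'⟩ _ hpq
    simp only [List.cons.injEq] at hpq
    exact Prod.ext (ofList_injective hpq.1) hpq.2
  · intro l hl l' hl' hne
    apply Finset.disjoint_left.mpr
    rintro L hL hL'
    rw [Finset.mem_image] at hL hL'
    obtain ⟨⟨A, B⟩, hAB, rfl⟩ := hL
    obtain ⟨⟨A', B'⟩, hAB', hEq⟩ := hL'
    rw [Finset.mem_product] at hAB hAB'
    simp only [List.cons.injEq] at hEq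
    apply hne
    have hA := (mem_FL _ _).mp hAB.1
    have hA' := (mem_FL _ _).mp hAB'.1
    rw [← hA', ← hA, ofList_injective hEq.1]

noncomputable def aseq (m : ℕ) : ℕ := (FL m).card
noncomputable def pseq (m : ℕ) : ℕ := ∑ L ∈ FL m, (if Even L.length then 1 else 0)
noncomputable def qseq (m : ℕ) : ℕ := ∑ L ∈ FL m, (if ¬ Even L.length then 1 else 0)
noncomputable def eseq (m : ℕ) : ℕ := ∑ L ∈ FL m, (L.map evenAr).sum
noncomputable def oseq (m : ℕ) : ℕ := ∑ L ∈ FL m, (L.map oddAr).sum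
noncomputable def Eseq (n : ℕ) : ℕ := ∑ t ∈ Tn n, evenAr t
noncomputable def Oseq (n : ℕ) : ℕ := ∑ t ∈ Tn n, oddAr t

lemma FL_zero : FL 0 = {[]} := by rw [FL]

@[simp] lemma aseq_zero : aseq 0 = 1 := by simp [aseq, FL_zero]
@[simp] lemma pseq_zero : pseq 0 = 1 := by
  rw [pseq, FL_zero, Finset.sum_singleton]; simp
@[simp] lemma qseq_zero : qseq 0 = 0 := by
  rw [qseq, FL_zero, Finset.sum_singleton]; simp
@[simp] lemma eseq_zero : eseq 0 = 0 := by simp [eseq, FL_zero]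
@[simp] lemma oseq_zero : oseq 0 = 0 := by simp [oseq, FL_zero]
@[simp] lemma Eseq_zero : Eseq 0 = 0 := by
  simp [Eseq, show Tn 0 = ∅ from by rw [Tn]]
@[simp] lemma Oseq_zero : Oseq 0 = 0 := by
  simp [Oseq, show Tn 0 = ∅ from by rw [Tn]]

lemma aseq_succ (m : ℕ) :
    aseq (m+1) = ∑ l ∈ Finset.range (m+1), aseq l * aseq (m-l) := by
  have h : aseq (m+1) = ∑ L ∈ FL (m+1), 1 := by simp [aseq]
  rw [h, sum_FL_succ (fun _ => (1:ℕ))]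
  apply Finset.sum_congr rfl
  intro l _
  simp [aseq, Finset.sum_const, mul_comm]

lemma pseq_succ (m : ℕ) :
    pseq (m+1) = ∑ l ∈ Finset.range (m+1), aseq l * qseq (m-l) := by
  rw [pseq, sum_FL_succ (fun L => if Even L.length then 1 else 0)]
  apply Finset.sum_congr rfl
  intro l _
  have : ∀ A B : List PTree6,
      (if Even (ofList A :: B).length then 1 else 0)
        = (if ¬ Even B.length then 1 else 0) := by
    intro A B
    simp [List.length_cons, Nat.even_add_one]
  simp only [this]
  rw [Finset.sum_const, ← qseq, smul_eq_mul, aseq]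

lemma qseq_succ (m : ℕ) :
    qseq (m+1) = ∑ l ∈ Finset.range (m+1), aseq l * pseq (m-l) := by
  rw [qseq, sum_FL_succ (fun L => if ¬ Even L.length then 1 else 0)]
  apply Finset.sum_congr rfl
  intro l _
  have : ∀ A B : List PTree6,
      (if ¬ Even (ofList A :: B).length then 1 else 0)
        = (if Even B.length then 1 else 0) := by
    intro A B
    simp [List.length_cons, Nat.even_add_one]
  simp only [this]
  rw [Finset.sum_const, ← pseq, smul_eq_mul, aseq]

lemma sum_sum_add {α β : Type*} (s : Finset α) (t : Finset β) (u : α → ℕ) (v : β → ℕ) :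
    ∑ a ∈ s, ∑ b ∈ t, (u a + v b) = (∑ a ∈ s, u a) * t.card + s.card * (∑ b ∈ t, v b) := by
  simp only [Finset.sum_add_distrib, Finset.sum_const, smul_eq_mul]
  rw [← Finset.mul_sum, mul_comm t.card]

lemma eseq_succ (m : ℕ) :
    eseq (m+1) = ∑ l ∈ Finset.range (m+1),
      ((pseq l + eseq l) * aseq (m-l) + aseq l * eseq (m-l)) := by
  rw [eseq, sum_FL_succ (fun L => (L.map evenAr).sum)]
  apply Finset.sum_congr rfl
  intro l _
  have h1 : ∀ A B : List PTree6,
      ((ofList A :: B).map evenAr).sum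
        = ((if Even A.length then 1 else 0) + (A.map evenAr).sum) + (B.map evenAr).sum := by
    intro A B
    simp [List.map_cons, List.sum_cons, evenAr_ofList]
  simp only [h1]
  rw [sum_sum_add, Finset.sum_add_distrib]
  rfl

lemma oseq_succ (m : ℕ) :
    oseq (m+1) = ∑ l ∈ Finset.range (m+1),
      ((qseq l + oseq l) * aseq (m-l) + aseq l * oseq (m-l)) := by
  rw [oseq, sum_FL_succ (fun L => (L.map oddAr).sum)]
  apply Finset.sum_congr rfl
  intro l _
  have h1 : ∀ A B : List PTree6,
      ((ofList A :: B).map oddAr).sum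
        = ((if ¬ Even A.length then 1 else 0) + (A.map oddAr).sum) + (B.map oddAr).sum := by
    intro A B
    simp [List.map_cons, List.sum_cons, oddAr_ofList]
  simp only [h1]
  rw [sum_sum_add, Finset.sum_add_distrib]
  rfl

lemma Eseq_succ (n : ℕ) : Eseq (n+1) = pseq n + eseq n := by
  rw [Eseq, sum_Tn_succ]
  simp only [evenAr_ofList]
  rw [Finset.sum_add_distrib]
  rfl

lemma Oseq_succ (n : ℕ) : Oseq (n+1) = qseq n + oseq n := by
  rw [Oseq, sum_Tn_succ]
  simp only [oddAr_ofList]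
  rw [Finset.sum_add_distrib]
  rfl

end PTree6

open PowerSeries

noncomputable def Aps : PowerSeries ℚ := PowerSeries.mk fun m => (PTree6.aseq m : ℚ)
noncomputable def Pps : PowerSeries ℚ := PowerSeries.mk fun m => (PTree6.pseq m : ℚ)
noncomputable def Qps : PowerSeries ℚ := PowerSeries.mk fun m => (PTree6.qseq m : ℚ)
noncomputable def Eps : PowerSeries ℚ := PowerSeries.mk fun m => (PTree6.eseq m : ℚ)
noncomputable def Ops : PowerSeries ℚ := PowerSeries.mk fun m => (PTree6.oseq m : ℚ)

lemma coeff_mk_mul (x y : ℕ → ℚ) (n : ℕ) :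
    coeff n (mk x * mk y) = ∑ l ∈ Finset.range (n+1), x l * y (n-l) := by
  rw [PowerSeries.coeff_mul, Finset.Nat.sum_antidiagonal_eq_sum_range_succ_mk]
  simp

lemma ne_zero_of_constantCoeff (φ : PowerSeries ℚ) (h : constantCoeff φ ≠ 0) : φ ≠ 0 := by
  intro h0; apply h; rw [h0]; simp

lemma hAps : Aps = 1 + X * (Aps * Aps) := by
  ext n
  cases n with
  | zero => simp [Aps]
  | succ n =>
    simp only [map_add, coeff_succ_X_mul, PowerSeries.coeff_one, Nat.succ_ne_zero, if_false,
      zero_add]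
    rw [Aps, coeff_mk, coeff_mk_mul, PTree6.aseq_succ]
    push_cast
    rfl

lemma hPps : Pps = 1 + X * (Aps * Qps) := by
  ext n
  cases n with
  | zero => simp [Pps]
  | succ n =>
    simp only [map_add, coeff_succ_X_mul, PowerSeries.coeff_one, Nat.succ_ne_zero, if_false,
      zero_add]
    rw [Pps, Aps, Qps, coeff_mk, coeff_mk_mul, PTree6.pseq_succ]
    push_cast
    rfl

lemma hQps : Qps = X * (Aps * Pps) := by
  ext n
  cases n with
  | zero => simp [Qps]
  | succ n =>
    rw [coeff_succ_X_mul, Qps, Aps, Pps, coeff_mk, coeff_mk_mul, PTree6.qseq_succ]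
    push_cast
    rfl

lemma hEps : Eps = X * (Pps * Aps) + X * (Eps * Aps) + X * (Aps * Eps) := by
  ext n
  cases n with
  | zero => simp [Eps]
  | succ n =>
    simp only [map_add, coeff_succ_X_mul]
    rw [Eps, Pps, Aps, coeff_mk, coeff_mk_mul, coeff_mk_mul, coeff_mk_mul, PTree6.eseq_succ]
    push_cast
    rw [← Finset.sum_add_distrib, ← Finset.sum_add_distrib]
    apply Finset.sum_congr rfl
    intro l _
    ring

lemma hOps : Ops = X * (Qps * Aps) + X * (Ops * Aps) + X * (Aps * Ops) := by
  ext n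
  cases n with
  | zero => simp [Ops]
  | succ n =>
    simp only [map_add, coeff_succ_X_mul]
    rw [Ops, Qps, Aps, coeff_mk, coeff_mk_mul, coeff_mk_mul, coeff_mk_mul, PTree6.oseq_succ]
    push_cast
    rw [← Finset.sum_add_distrib, ← Finset.sum_add_distrib]
    apply Finset.sum_congr rfl
    intro l _
    ring

lemma hmkE : (PowerSeries.mk fun n => (PTree6.Eseq n : ℚ)) = X * (Pps + Eps) := by
  ext n
  cases n with
  | zero => simp
  | succ n =>
    rw [coeff_succ_X_mul, coeff_mk, map_add, Pps, Eps, coeff_mk, coeff_mk, PTree6.Eseq_succ]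
    push_cast
    rfl

lemma hmkO : (PowerSeries.mk fun n => (PTree6.Oseq n : ℚ)) = X * (Qps + Ops) := by
  ext n
  cases n with
  | zero => simp
  | succ n =>
    rw [coeff_succ_X_mul, coeff_mk, map_add, Qps, Ops, coeff_mk, coeff_mk, PTree6.Oseq_succ]
    push_cast
    rfl

/-- In the set of all planar rooted trees with `n` vertices, the total
number of vertices with even arity equals the `n`-th log-Catalan number `c'_n`.
Equivalently, the generating series of the total number of odd-arity vertices over
all planar rooted trees with `n` vertices equals `t(1-√(1-4t))/((3-√(1-4t))√(1-4t))`,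
with coefficients `0, 1, 2, 7, 24, 86, 314, …`. -/
theorem stmt6 (c : ℕ → ℕ) (hc1 : c 1 = 1)
    (hrec : ∀ n, 2 ≤ n → c n = ∑ l ∈ Finset.Ico 1 n, c l * c (n - l))
    (f : PowerSeries ℚ)
    (hf : f = PowerSeries.mk fun n => if n = 0 then 0 else (c n : ℚ))
    (c' : ℕ → ℚ) (hc'0 : c' 0 = 0)
    (hc' : (PowerSeries.mk fun n => c' n) * (1 + f) =
      PowerSeries.X * PowerSeries.derivativeFun f)
    (O : ℕ → ℕ) (hO0 : O 0 = 0)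
    (hO : ∀ n, 1 ≤ n → ∀ Tset : Finset PTree6, (∀ t, t ∈ Tset ↔ t.vcount = n) →
      O n = ∑ t ∈ Tset, t.oddAr) :
    (∀ n, 1 ≤ n → ∀ Tset : Finset PTree6, (∀ t, t ∈ Tset ↔ t.vcount = n) →
      ((∑ t ∈ Tset, t.evenAr : ℚ) = c' n)) ∧
    (∀ s : PowerSeries ℚ, s ^ 2 = 1 - 4 * PowerSeries.X →
      PowerSeries.constantCoeff s = 1 →
      (PowerSeries.mk fun n => (O n : ℚ)) * ((3 - s) * s) =
        PowerSeries.X * (1 - s)) ∧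
    O 1 = 0 ∧ O 2 = 1 ∧ O 3 = 2 ∧ O 4 = 7 ∧ O 5 = 24 ∧ O 6 = 86 ∧ O 7 = 314 := by
  -- link c to aseq
  have hca : ∀ n, c (n+1) = PTree6.aseq n := by
    intro n
    induction n using Nat.strong_induction_on with
    | _ n ih =>
      match n with
      | 0 => simpa using hc1
      | (m+1) =>
        rw [hrec (m+2) (by omega), PTree6.aseq_succ]
        rw [Finset.sum_Ico_eq_sum_range]
        have hmm : m + 2 - 1 = m + 1 := rfl
        rw [hmm]
        apply Finset.sum_congr rfl
        intro i hi
        rw [Finset.mem_range] at hi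
        have h1 : c (1 + i) = PTree6.aseq i := by rw [add_comm]; exact ih i (by omega)
        have h2 : m + 2 - (1 + i) = (m - i) + 1 := by omega
        have h3 : c (m + 2 - (1 + i)) = PTree6.aseq (m - i) := by
          rw [h2]; exact ih (m-i) (by omega)
        rw [h1, h3]
  have hfA : f = X * Aps := by
    ext n
    cases n with
    | zero => simp [hf]
    | succ n =>
      rw [hf, coeff_mk, coeff_succ_X_mul, Aps, coeff_mk]
      simp [hca n]
  have hfc0 : constantCoeff f = 0 := by rw [hf]; simp
  have hsub : f - f * f = X := by
    rw [hfA]; linear_combination X * hAps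
  have hfd : derivativeFun f * (1 - 2 * f) = 1 := by
    have hf2 : f = X + f * f := by linear_combination hsub
    have hd : derivativeFun f = derivativeFun (X + f * f) := by rw [← hf2]
    rw [derivativeFun_add, derivativeFun_mul] at hd
    have hdX : derivativeFun (X : PowerSeries ℚ) = 1 := derivative_X (R := ℚ)
    rw [hdX, smul_eq_mul] at hd
    linear_combination hd
  have hE1 : Eps * (1 - 2 * f) = X * (Pps * Aps) := by
    rw [hfA]; linear_combination hEps
  have hO1 : Ops * (1 - 2 * f) = X * (Qps * Aps) := by
    rw [hfA]; linear_combination hOps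
  have hP1 : Pps * ((1 - f) * (1 + f)) = 1 := by
    rw [hfA]; linear_combination hPps + (X * Aps) * hQps
  have h2f : (1 : PowerSeries ℚ) - 2 * f ≠ 0 := by
    apply ne_zero_of_constantCoeff
    simp [hfc0]
  have h1f : (1 : PowerSeries ℚ) + f ≠ 0 := by
    apply ne_zero_of_constantCoeff
    simp [hfc0]
  have hB : (PowerSeries.mk fun n => (PTree6.Eseq n : ℚ)) * (1 + f)
      = X * derivativeFun f := by
    apply mul_right_cancel₀ h2f
    linear_combination ((1 + f) * (1 - 2 * f)) * hmkE + (X * (1 + f)) * hE1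
      - (X * (1 + f) * Pps) * hfA + X * hP1 - X * hfd
  refine ⟨?_, ?_, ?_⟩
  · -- part 1
    have hEq : (PowerSeries.mk fun n => c' n)
        = PowerSeries.mk fun n => (PTree6.Eseq n : ℚ) := by
      apply mul_right_cancel₀ h1f
      rw [hc', hB]
    intro n hn Tset hTset
    have hT : Tset = PTree6.Tn n := by
      apply Finset.ext
      intro t
      rw [hTset, PTree6.mem_Tn]
    rw [hT]
    have h1 := congrArg (coeff n) hEq
    rw [coeff_mk, coeff_mk] at h1
    rw [h1, PTree6.Eseq]
    push_cast
    rfl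
  · -- part 2
    intro s hs2 hs1
    have hOv : ∀ n, 1 ≤ n → O n = PTree6.Oseq n := by
      intro n hn
      rw [hO n hn (PTree6.Tn n) (PTree6.mem_Tn n)]
      rfl
    have hOmk : (PowerSeries.mk fun n => (O n : ℚ))
        = PowerSeries.mk fun n => (PTree6.Oseq n : ℚ) := by
      ext n
      cases n with
      | zero => simp [hO0]
      | succ n => simp [hOv (n+1) (by omega)]
    have hs : s = 1 - 2 * f := by
      have h0 : (s - (1 - 2 * f)) * (s + (1 - 2 * f)) = 0 := by
        linear_combination hs2 + 4 * hsub
      rcases mul_eq_zero.mp h0 with h | h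
      · linear_combination h
      · exfalso
        have h2 := congrArg constantCoeff h
        simp [hs1, hfc0] at h2
    rw [hOmk, hmkO, hs, hfA]
    have hO1' : Ops * (1 - 2 * (X * Aps)) = X * (Qps * Aps) := by
      rw [← hfA]; exact hO1
    have hP1' : Pps * ((1 - X * Aps) * (1 + X * Aps)) = 1 := by
      rw [← hfA]; exact hP1
    linear_combination (2 * X * (1 + X * Aps)) * hO1'
      + (2 * X * (1 + X * Aps) * (1 - X * Aps)) * hQps
      + (2 * X * X * Aps) * hP1'
  · -- part 3 numerics
    have hOv : ∀ n, 1 ≤ n → O n = PTree6.Oseq n := by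
      intro n hn
      rw [hO n hn (PTree6.Tn n) (PTree6.mem_Tn n)]
      rfl
    have a1 : PTree6.aseq 1 = 1 := by
      rw [show (1:ℕ) = 0 + 1 by norm_num, PTree6.aseq_succ]
      norm_num [Finset.sum_range_succ, PTree6.aseq_zero, PTree6.pseq_zero, PTree6.qseq_zero, PTree6.oseq_zero]
    have q1 : PTree6.qseq 1 = 1 := by
      rw [show (1:ℕ) = 0 + 1 by norm_num, PTree6.qseq_succ]
      norm_num [Finset.sum_range_succ, PTree6.aseq_zero, PTree6.pseq_zero, PTree6.qseq_zero, PTree6.oseq_zero, a1]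
    have p1 : PTree6.pseq 1 = 0 := by
      rw [show (1:ℕ) = 0 + 1 by norm_num, PTree6.pseq_succ]
      norm_num [Finset.sum_range_succ, PTree6.aseq_zero, PTree6.pseq_zero, PTree6.qseq_zero, PTree6.oseq_zero, a1, q1]
    have o1 : PTree6.oseq 1 = 0 := by
      rw [show (1:ℕ) = 0 + 1 by norm_num, PTree6.oseq_succ]
      norm_num [Finset.sum_range_succ, PTree6.aseq_zero, PTree6.pseq_zero, PTree6.qseq_zero, PTree6.oseq_zero, a1, q1, p1]
    have a2 : PTree6.aseq 2 = 2 := by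
      rw [show (2:ℕ) = 1 + 1 by norm_num, PTree6.aseq_succ]
      norm_num [Finset.sum_range_succ, PTree6.aseq_zero, PTree6.pseq_zero, PTree6.qseq_zero, PTree6.oseq_zero, a1, q1, p1, o1]
    have q2 : PTree6.qseq 2 = 1 := by
      rw [show (2:ℕ) = 1 + 1 by norm_num, PTree6.qseq_succ]
      norm_num [Finset.sum_range_succ, PTree6.aseq_zero, PTree6.pseq_zero, PTree6.qseq_zero, PTree6.oseq_zero, a1, q1, p1, o1, a2]
    have p2 : PTree6.pseq 2 = 1 := by
      rw [show (2:ℕ) = 1 + 1 by norm_num, PTree6.pseq_succ]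
      norm_num [Finset.sum_range_succ, PTree6.aseq_zero, PTree6.pseq_zero, PTree6.qseq_zero, PTree6.oseq_zero, a1, q1, p1, o1, a2, q2]
    have o2 : PTree6.oseq 2 = 1 := by
      rw [show (2:ℕ) = 1 + 1 by norm_num, PTree6.oseq_succ]
      norm_num [Finset.sum_range_succ, PTree6.aseq_zero, PTree6.pseq_zero, PTree6.qseq_zero, PTree6.oseq_zero, a1, q1, p1, o1, a2, q2, p2]
    have a3 : PTree6.aseq 3 = 5 := by
      rw [show (3:ℕ) = 2 + 1 by norm_num, PTree6.aseq_succ]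
      norm_num [Finset.sum_range_succ, PTree6.aseq_zero, PTree6.pseq_zero, PTree6.qseq_zero, PTree6.oseq_zero, a1, q1, p1, o1, a2, q2, p2, o2]
    have q3 : PTree6.qseq 3 = 3 := by
      rw [show (3:ℕ) = 2 + 1 by norm_num, PTree6.qseq_succ]
      norm_num [Finset.sum_range_succ, PTree6.aseq_zero, PTree6.pseq_zero, PTree6.qseq_zero, PTree6.oseq_zero, a1, q1, p1, o1, a2, q2, p2, o2, a3]
    have p3 : PTree6.pseq 3 = 2 := by
      rw [show (3:ℕ) = 2 + 1 by norm_num, PTree6.pseq_succ]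
      norm_num [Finset.sum_range_succ, PTree6.aseq_zero, PTree6.pseq_zero, PTree6.qseq_zero, PTree6.oseq_zero, a1, q1, p1, o1, a2, q2, p2, o2, a3, q3]
    have o3 : PTree6.oseq 3 = 4 := by
      rw [show (3:ℕ) = 2 + 1 by norm_num, PTree6.oseq_succ]
      norm_num [Finset.sum_range_succ, PTree6.aseq_zero, PTree6.pseq_zero, PTree6.qseq_zero, PTree6.oseq_zero, a1, q1, p1, o1, a2, q2, p2, o2, a3, q3, p3]
    have a4 : PTree6.aseq 4 = 14 := by
      rw [show (4:ℕ) = 3 + 1 by norm_num, PTree6.aseq_succ]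
      norm_num [Finset.sum_range_succ, PTree6.aseq_zero, PTree6.pseq_zero, PTree6.qseq_zero, PTree6.oseq_zero, a1, q1, p1, o1, a2, q2, p2, o2, a3, q3, p3, o3]
    have q4 : PTree6.qseq 4 = 8 := by
      rw [show (4:ℕ) = 3 + 1 by norm_num, PTree6.qseq_succ]
      norm_num [Finset.sum_range_succ, PTree6.aseq_zero, PTree6.pseq_zero, PTree6.qseq_zero, PTree6.oseq_zero, a1, q1, p1, o1, a2, q2, p2, o2, a3, q3, p3, o3, a4]
    have p4 : PTree6.pseq 4 = 6 := by
      rw [show (4:ℕ) = 3 + 1 by norm_num, PTree6.pseq_succ]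
      norm_num [Finset.sum_range_succ, PTree6.aseq_zero, PTree6.pseq_zero, PTree6.qseq_zero, PTree6.oseq_zero, a1, q1, p1, o1, a2, q2, p2, o2, a3, q3, p3, o3, a4, q4]
    have o4 : PTree6.oseq 4 = 16 := by
      rw [show (4:ℕ) = 3 + 1 by norm_num, PTree6.oseq_succ]
      norm_num [Finset.sum_range_succ, PTree6.aseq_zero, PTree6.pseq_zero, PTree6.qseq_zero, PTree6.oseq_zero, a1, q1, p1, o1, a2, q2, p2, o2, a3, q3, p3, o3, a4, q4, p4]
    have a5 : PTree6.aseq 5 = 42 := by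
      rw [show (5:ℕ) = 4 + 1 by norm_num, PTree6.aseq_succ]
      norm_num [Finset.sum_range_succ, PTree6.aseq_zero, PTree6.pseq_zero, PTree6.qseq_zero, PTree6.oseq_zero, a1, q1, p1, o1, a2, q2, p2, o2, a3, q3, p3, o3, a4, q4, p4, o4]
    have q5 : PTree6.qseq 5 = 24 := by
      rw [show (5:ℕ) = 4 + 1 by norm_num, PTree6.qseq_succ]
      norm_num [Finset.sum_range_succ, PTree6.aseq_zero, PTree6.pseq_zero, PTree6.qseq_zero, PTree6.oseq_zero, a1, q1, p1, o1, a2, q2, p2, o2, a3, q3, p3, o3, a4, q4, p4, o4, a5]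
    have p5 : PTree6.pseq 5 = 18 := by
      rw [show (5:ℕ) = 4 + 1 by norm_num, PTree6.pseq_succ]
      norm_num [Finset.sum_range_succ, PTree6.aseq_zero, PTree6.pseq_zero, PTree6.qseq_zero, PTree6.oseq_zero, a1, q1, p1, o1, a2, q2, p2, o2, a3, q3, p3, o3, a4, q4, p4, o4, a5, q5]
    have o5 : PTree6.oseq 5 = 62 := by
      rw [show (5:ℕ) = 4 + 1 by norm_num, PTree6.oseq_succ]
      norm_num [Finset.sum_range_succ, PTree6.aseq_zero, PTree6.pseq_zero, PTree6.qseq_zero, PTree6.oseq_zero, a1, q1, p1, o1, a2, q2, p2, o2, a3, q3, p3, o3, a4, q4, p4, o4, a5, q5, p5]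
    have a6 : PTree6.aseq 6 = 132 := by
      rw [show (6:ℕ) = 5 + 1 by norm_num, PTree6.aseq_succ]
      norm_num [Finset.sum_range_succ, PTree6.aseq_zero, PTree6.pseq_zero, PTree6.qseq_zero, PTree6.oseq_zero, a1, q1, p1, o1, a2, q2, p2, o2, a3, q3, p3, o3, a4, q4, p4, o4, a5, q5, p5, o5]
    have q6 : PTree6.qseq 6 = 75 := by
      rw [show (6:ℕ) = 5 + 1 by norm_num, PTree6.qseq_succ]
      norm_num [Finset.sum_range_succ, PTree6.aseq_zero, PTree6.pseq_zero, PTree6.qseq_zero, PTree6.oseq_zero, a1, q1, p1, o1, a2, q2, p2, o2, a3, q3, p3, o3, a4, q4, p4, o4, a5, q5, p5, o5, a6]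
    have o6 : PTree6.oseq 6 = 239 := by
      rw [show (6:ℕ) = 5 + 1 by norm_num, PTree6.oseq_succ]
      norm_num [Finset.sum_range_succ, PTree6.aseq_zero, PTree6.pseq_zero, PTree6.qseq_zero, PTree6.oseq_zero, a1, q1, p1, o1, a2, q2, p2, o2, a3, q3, p3, o3, a4, q4, p4, o4, a5, q5, p5, o5, a6, q6]
    have hOval1 : O 1 = 0 := by
      rw [hOv 1 (by norm_num), show (1:ℕ) = 0 + 1 by norm_num, PTree6.Oseq_succ]
      norm_num [PTree6.aseq_zero, PTree6.pseq_zero, PTree6.qseq_zero, PTree6.oseq_zero, a1, q1, p1, o1, a2, q2, p2, o2, a3, q3, p3, o3, a4, q4, p4, o4, a5, q5, p5, o5, a6, q6, o6]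
    have hOval2 : O 2 = 1 := by
      rw [hOv 2 (by norm_num), show (2:ℕ) = 1 + 1 by norm_num, PTree6.Oseq_succ]
      norm_num [PTree6.aseq_zero, PTree6.pseq_zero, PTree6.qseq_zero, PTree6.oseq_zero, a1, q1, p1, o1, a2, q2, p2, o2, a3, q3, p3, o3, a4, q4, p4, o4, a5, q5, p5, o5, a6, q6, o6]
    have hOval3 : O 3 = 2 := by
      rw [hOv 3 (by norm_num), show (3:ℕ) = 2 + 1 by norm_num, PTree6.Oseq_succ]
      norm_num [PTree6.aseq_zero, PTree6.pseq_zero, PTree6.qseq_zero, PTree6.oseq_zero, a1, q1, p1, o1, a2, q2, p2, o2, a3, q3, p3, o3, a4, q4, p4, o4, a5, q5, p5, o5, a6, q6, o6]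
    have hOval4 : O 4 = 7 := by
      rw [hOv 4 (by norm_num), show (4:ℕ) = 3 + 1 by norm_num, PTree6.Oseq_succ]
      norm_num [PTree6.aseq_zero, PTree6.pseq_zero, PTree6.qseq_zero, PTree6.oseq_zero, a1, q1, p1, o1, a2, q2, p2, o2, a3, q3, p3, o3, a4, q4, p4, o4, a5, q5, p5, o5, a6, q6, o6]
    have hOval5 : O 5 = 24 := by
      rw [hOv 5 (by norm_num), show (5:ℕ) = 4 + 1 by norm_num, PTree6.Oseq_succ]
      norm_num [PTree6.aseq_zero, PTree6.pseq_zero, PTree6.qseq_zero, PTree6.oseq_zero, a1, q1, p1, o1, a2, q2, p2, o2, a3, q3, p3, o3, a4, q4, p4, o4, a5, q5, p5, o5, a6, q6, o6]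
    have hOval6 : O 6 = 86 := by
      rw [hOv 6 (by norm_num), show (6:ℕ) = 5 + 1 by norm_num, PTree6.Oseq_succ]
      norm_num [PTree6.aseq_zero, PTree6.pseq_zero, PTree6.qseq_zero, PTree6.oseq_zero, a1, q1, p1, o1, a2, q2, p2, o2, a3, q3, p3, o3, a4, q4, p4, o4, a5, q5, p5, o5, a6, q6, o6]
    have hOval7 : O 7 = 314 := by
      rw [hOv 7 (by norm_num), show (7:ℕ) = 6 + 1 by norm_num, PTree6.Oseq_succ]
      norm_num [PTree6.aseq_zero, PTree6.pseq_zero, PTree6.qseq_zero, PTree6.oseq_zero, a1, q1, p1, o1, a2, q2, p2, o2, a3, q3, p3, o3, a4, q4, p4, o4, a5, q5, p5, o5, a6, q6, o6]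
    exact ⟨hOval1, hOval2, hOval3, hOval4, hOval5, hOval6, hOval7⟩
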